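/- arXiv:1406.2973 — 3 statements merged into one kernel-verified Lean document; each statement's English description precedes it below -/
import Mathlib

section
/- If η and τ are square matrices with η positive semidefinite, 0 < ε < 1, and ‖η − τ‖_{2M} ≤ (ε/M)·‖η‖_{2M} in Schatten 2M-norm, then ‖η² − τ†τ‖_M ≤ (3ε/M)·‖η²‖_M in Schatten M-norm. -/
open scoped ComplexOrder

/-- The Schatten `p`-norm of a complex square matrix: the `ℓ^p` norm of its
singular values (the square roots of the eigenvalues of `Aᴴ * A`). -/
noncomputable def schattenNorm {n : ℕ} (p : ℝ) (A : Matrix (Fin n) (Fin n) ℂ) : ℝ :=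
  (∑ i, Real.sqrt ((Matrix.isHermitian_conjTranspose_mul_self A).eigenvalues i) ^ p) ^ (1 / p)

namespace SB
open Matrix Finset Polynomial
variable {n : ℕ}

noncomputable def nsq (a : Fin n → ℂ) : ℝ := ∑ k, Complex.normSq (a k)

lemma nsq_nonneg (a : Fin n → ℂ) : 0 ≤ nsq a :=
  Finset.sum_nonneg fun _ _ => Complex.normSq_nonneg _

lemma re_dot_self (a : Fin n → ℂ) : (dotProduct (star a) a).re = nsq a := by
  simp [dotProduct, nsq, Complex.re_sum, Complex.normSq_apply]

lemma nsq_eq_sum_norm (a : Fin n → ℂ) : nsq a = ∑ k, ‖a k‖ ^ 2 := by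
  simp [nsq, Complex.normSq_eq_norm_sq]

lemma sqrt_nsq_eq_norm (a : Fin n → ℂ) :
    Real.sqrt (nsq a) = ‖(WithLp.equiv 2 (Fin n → ℂ)).symm a‖ := by
  rw [EuclideanSpace.norm_eq, nsq_eq_sum_norm]
  rfl

lemma quad_eq_nsq (A : Matrix (Fin n) (Fin n) ℂ) (v : Fin n → ℂ) :
    (dotProduct (star v) ((Aᴴ * A) *ᵥ v)).re = nsq (A *ᵥ v) := by
  rw [← Matrix.mulVec_mulVec, Matrix.dotProduct_mulVec, ← Matrix.star_mulVec, re_dot_self]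

lemma abs_re_dot_le (a b : Fin n → ℂ) :
    |(dotProduct (star a) b).re| ≤ Real.sqrt (nsq a) * Real.sqrt (nsq b) := by
  rw [dotProduct_comm, ← EuclideanSpace.inner_toLp_toLp, sqrt_nsq_eq_norm, sqrt_nsq_eq_norm]
  calc |(inner ℂ ((WithLp.equiv 2 (Fin n → ℂ)).symm a) ((WithLp.equiv 2 (Fin n → ℂ)).symm b) : ℂ).re|
      ≤ ‖(inner ℂ ((WithLp.equiv 2 (Fin n → ℂ)).symm a) ((WithLp.equiv 2 (Fin n → ℂ)).symm b) : ℂ)‖ :=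
        Complex.abs_re_le_norm _
    _ ≤ _ := norm_inner_le_norm _ _

lemma sqrt_nsq_sub_le (a b : Fin n → ℂ) :
    Real.sqrt (nsq (a - b)) ≤ Real.sqrt (nsq a) + Real.sqrt (nsq b) := by
  rw [sqrt_nsq_eq_norm, sqrt_nsq_eq_norm, sqrt_nsq_eq_norm]
  have : (WithLp.equiv 2 (Fin n → ℂ)).symm (a - b)
      = (WithLp.equiv 2 (Fin n → ℂ)).symm a - (WithLp.equiv 2 (Fin n → ℂ)).symm b := rfl
  rw [this]
  exact norm_sub_le _ _

lemma det_conj_diag (V : Matrix (Fin n) (Fin n) ℂ) (hV : V ∈ Matrix.unitaryGroup (Fin n) ℂ)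
    (a : Fin n → ℝ) (t : ℂ) :
    Matrix.det (t • (1 : Matrix (Fin n) (Fin n) ℂ)
      - V * Matrix.diagonal (Complex.ofReal ∘ a) * star V) = ∏ i, (t - (a i : ℂ)) := by
  have h1 : V * star V = 1 := Matrix.mem_unitaryGroup_iff.mp hV
  have h2 : star V * V = 1 := Matrix.mem_unitaryGroup_iff'.mp hV
  have e : t • (1 : Matrix (Fin n) (Fin n) ℂ)
      - V * Matrix.diagonal (Complex.ofReal ∘ a) * star V
      = V * (t • (1 : Matrix (Fin n) (Fin n) ℂ) - Matrix.diagonal (Complex.ofReal ∘ a))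
        * star V := by
    rw [Matrix.mul_sub, Matrix.sub_mul, Matrix.mul_smul, Matrix.smul_mul, mul_one, h1]
  rw [e, Matrix.det_mul, Matrix.det_mul, mul_comm, ← mul_assoc, ← Matrix.det_mul, h2]
  have e2 : t • (1 : Matrix (Fin n) (Fin n) ℂ) - Matrix.diagonal (Complex.ofReal ∘ a)
      = Matrix.diagonal (fun i => t - (a i : ℂ)) := by
    ext i j
    by_cases hij : i = j <;>
      simp [hij, Matrix.one_apply, Matrix.diagonal, Matrix.smul_apply]
  rw [Matrix.det_one, one_mul, e2, Matrix.det_diagonal]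

lemma sum_f_eig {P : Matrix (Fin n) (Fin n) ℂ} (hP : P.IsHermitian)
    (W : Matrix (Fin n) (Fin n) ℂ) (hW : W ∈ Matrix.unitaryGroup (Fin n) ℂ) (d : Fin n → ℝ)
    (hPW : P = W * Matrix.diagonal (Complex.ofReal ∘ d) * star W) (f : ℝ → ℝ) :
    ∑ i, f (hP.eigenvalues i) = ∑ i, f (d i) := by
  have key : ∀ t : ℂ, ∏ i, (t - (d i : ℂ)) = ∏ i, (t - (hP.eigenvalues i : ℂ)) := by
    intro t
    have hsp : P = (hP.eigenvectorUnitary : Matrix (Fin n) (Fin n) ℂ)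
        * Matrix.diagonal (Complex.ofReal ∘ hP.eigenvalues)
        * star (hP.eigenvectorUnitary : Matrix (Fin n) (Fin n) ℂ) := hP.spectral_theorem
    rw [← det_conj_diag W hW d t, ← det_conj_diag _ (hP.eigenvectorUnitary).2 hP.eigenvalues t,
      ← hPW, ← hsp]
  have hpoly : (∏ i, (X - C ((d i : ℂ)))) = ∏ i, (X - C ((hP.eigenvalues i : ℂ))) := by
    apply Polynomial.funext
    intro t
    simpa [Polynomial.eval_prod] using key t
  have hms : Multiset.map (fun i => ((d i : ℂ))) Finset.univ.val
      = Multiset.map (fun i => ((hP.eigenvalues i : ℂ))) Finset.univ.val := by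
    have h1 : ∀ (c : Fin n → ℂ), (∏ i, (X - C (c i)))
        = ((Finset.univ.val.map c).map (fun r => X - C r)).prod := by
      intro c
      rw [Multiset.map_map, Finset.prod_eq_multiset_prod]
      rfl
    have := congrArg Polynomial.roots hpoly
    rwa [h1, h1, Polynomial.roots_multiset_prod_X_sub_C,
      Polynomial.roots_multiset_prod_X_sub_C] at this
  have h2 : ∀ (c : Fin n → ℝ), ∑ i, f (c i)
      = ((Finset.univ.val.map (fun i => ((c i : ℂ)))).map (fun z => f z.re)).sum := by
    intro c
    rw [Multiset.map_map, Finset.sum_eq_multiset_sum]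
    simp [Function.comp]
  rw [h2, h2, hms]

lemma unitary_row_sum {T : Matrix (Fin n) (Fin n) ℂ} (hT : T ∈ Matrix.unitaryGroup (Fin n) ℂ)
    (j : Fin n) : ∑ i, Complex.normSq (T j i) = 1 := by
  have h1 : T * star T = 1 := Matrix.mem_unitaryGroup_iff.mp hT
  have := congrArg (fun B : Matrix (Fin n) (Fin n) ℂ => (B j j).re) h1
  simpa [Matrix.mul_apply, Matrix.one_apply, Complex.re_sum, Complex.normSq_apply,
    Complex.mul_re] using this

lemma unitary_col_sum {T : Matrix (Fin n) (Fin n) ℂ} (hT : T ∈ Matrix.unitaryGroup (Fin n) ℂ)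
    (i : Fin n) : ∑ j, Complex.normSq (T j i) = 1 := by
  have h1 : star T * T = 1 := Matrix.mem_unitaryGroup_iff'.mp hT
  have := congrArg (fun B : Matrix (Fin n) (Fin n) ℂ => (B i i).re) h1
  simpa [Matrix.mul_apply, Matrix.one_apply, Complex.re_sum, Complex.normSq_apply,
    Complex.mul_re, mul_comm] using this

lemma re_dot_diag (μ : Fin n → ℝ) (w : Fin n → ℂ) :
    (dotProduct (star w) (Matrix.diagonal (Complex.ofReal ∘ μ) *ᵥ w)).re
      = ∑ j, Complex.normSq (w j) * μ j := by
  simp [dotProduct, Matrix.mulVec_diagonal, Complex.re_sum, Complex.normSq_apply,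
    Complex.mul_re]
  ring_nf
  apply Finset.sum_congr rfl
  intro j _
  ring

lemma lemmaA (A X : Matrix (Fin n) (Fin n) ℂ) (hX : X.IsHermitian) (M : ℕ) :
    ∑ i, (nsq (A *ᵥ ⇑(hX.eigenvectorBasis i))) ^ M
      ≤ ∑ i, ((Matrix.isHermitian_conjTranspose_mul_self A).eigenvalues i) ^ M := by
  classical
  set hP := Matrix.isHermitian_conjTranspose_mul_self A with hPdef
  set μ : Fin n → ℝ := hP.eigenvalues with hμ
  set U : Matrix (Fin n) (Fin n) ℂ := ↑hP.eigenvectorUnitary with hU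
  set V : Matrix (Fin n) (Fin n) ℂ := ↑hX.eigenvectorUnitary with hV
  set T : Matrix (Fin n) (Fin n) ℂ := star U * V with hT
  have hVV : V * star V = 1 := Matrix.mem_unitaryGroup_iff.mp hX.eigenvectorUnitary.2
  have hUU : star U * U = 1 := Matrix.mem_unitaryGroup_iff'.mp hP.eigenvectorUnitary.2
  have hTmem : T ∈ Matrix.unitaryGroup (Fin n) ℂ := by
    rw [Matrix.mem_unitaryGroup_iff]
    have hsT : star T = star V * U := by
      rw [hT, StarMul.star_mul, star_star]
    rw [hsT, hT, mul_assoc, ← mul_assoc V, hVV, one_mul, hUU]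
  have hμ0 : ∀ j, 0 ≤ μ j := fun j => Matrix.eigenvalues_conjTranspose_mul_self_nonneg A j
  have key : ∀ i, nsq (A *ᵥ ⇑(hX.eigenvectorBasis i)) = ∑ j, Complex.normSq (T j i) * μ j := by
    intro i
    set v : Fin n → ℂ := ⇑(hX.eigenvectorBasis i) with hv
    have hsp : Aᴴ * A = U * Matrix.diagonal (Complex.ofReal ∘ μ) * star U := hP.spectral_theorem
    have h0 : nsq (A *ᵥ v) = (dotProduct (star v) ((Aᴴ * A) *ᵥ v)).re :=
      (quad_eq_nsq A v).symm
    have hw : star U *ᵥ v = fun j => T j i := by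
      ext j
      rw [hv]
      simp [hT, hV, Matrix.mulVec, Matrix.mul_apply, dotProduct,
        Matrix.IsHermitian.eigenvectorUnitary_apply]
    have hstep : dotProduct (star v) ((Aᴴ * A) *ᵥ v)
        = dotProduct (star (star U *ᵥ v))
            (Matrix.diagonal (Complex.ofReal ∘ μ) *ᵥ (star U *ᵥ v)) := by
      rw [hsp, ← Matrix.mulVec_mulVec, ← Matrix.mulVec_mulVec, Matrix.dotProduct_mulVec]
      congr 1
      rw [Matrix.star_mulVec, Matrix.star_eq_conjTranspose,
        Matrix.conjTranspose_conjTranspose]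
    rw [h0, hstep, hw, re_dot_diag]
  calc ∑ i, (nsq (A *ᵥ ⇑(hX.eigenvectorBasis i))) ^ M
      = ∑ i, (∑ j, Complex.normSq (T j i) * μ j) ^ M := by
        exact Finset.sum_congr rfl fun i _ => by rw [key i]
    _ ≤ ∑ i, ∑ j, Complex.normSq (T j i) * μ j ^ M := by
        apply Finset.sum_le_sum
        intro i _
        have hj := (convexOn_pow (𝕜 := ℝ) M).map_sum_le
          (t := Finset.univ) (w := fun j => Complex.normSq (T j i)) (p := μ)
          (fun j _ => Complex.normSq_nonneg _) (unitary_col_sum hTmem i)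
          (fun j _ => hμ0 j)
        simpa [smul_eq_mul] using hj
    _ = ∑ j, (∑ i, Complex.normSq (T j i)) * μ j ^ M := by
        rw [Finset.sum_comm]
        simp [Finset.sum_mul]
    _ = ∑ j, μ j ^ M := by
        apply Finset.sum_congr rfl
        intro j _
        rw [unitary_row_sum hTmem j, one_mul]

lemma spectral_pow {Y : Matrix (Fin n) (Fin n) ℂ} (hY : Y.IsHermitian) (k : ℕ) :
    Y ^ k = (hY.eigenvectorUnitary : Matrix (Fin n) (Fin n) ℂ)
      * Matrix.diagonal (Complex.ofReal ∘ fun i => hY.eigenvalues i ^ k)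
      * star (hY.eigenvectorUnitary : Matrix (Fin n) (Fin n) ℂ) := by
  have hWW : (hY.eigenvectorUnitary : Matrix (Fin n) (Fin n) ℂ)
      * star (hY.eigenvectorUnitary : Matrix (Fin n) (Fin n) ℂ) = 1 :=
    Matrix.mem_unitaryGroup_iff.mp hY.eigenvectorUnitary.2
  have hWW' : star (hY.eigenvectorUnitary : Matrix (Fin n) (Fin n) ℂ)
      * (hY.eigenvectorUnitary : Matrix (Fin n) (Fin n) ℂ) = 1 :=
    Matrix.mem_unitaryGroup_iff'.mp hY.eigenvectorUnitary.2
  have conj_mul : ∀ (A B : Matrix (Fin n) (Fin n) ℂ),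
      ((hY.eigenvectorUnitary : Matrix (Fin n) (Fin n) ℂ) * A
          * star (hY.eigenvectorUnitary : Matrix (Fin n) (Fin n) ℂ))
        * ((hY.eigenvectorUnitary : Matrix (Fin n) (Fin n) ℂ) * B
          * star (hY.eigenvectorUnitary : Matrix (Fin n) (Fin n) ℂ))
      = (hY.eigenvectorUnitary : Matrix (Fin n) (Fin n) ℂ) * (A * B)
          * star (hY.eigenvectorUnitary : Matrix (Fin n) (Fin n) ℂ) := by
    intro A B
    calc (↑hY.eigenvectorUnitary * A * star (hY.eigenvectorUnitary : Matrix (Fin n) (Fin n) ℂ))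
        * (↑hY.eigenvectorUnitary * B * star (hY.eigenvectorUnitary : Matrix (Fin n) (Fin n) ℂ))
        = ↑hY.eigenvectorUnitary * A
            * ((star (hY.eigenvectorUnitary : Matrix (Fin n) (Fin n) ℂ) * ↑hY.eigenvectorUnitary)
            * (B * star (hY.eigenvectorUnitary : Matrix (Fin n) (Fin n) ℂ))) := by
          noncomm_ring
      _ = _ := by rw [hWW', one_mul]; noncomm_ring
  induction k with
  | zero =>
    have h0 : (Complex.ofReal ∘ fun i : Fin n => hY.eigenvalues i ^ 0) = fun _ => (1 : ℂ) := by
      funext i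
      simp
    rw [pow_zero, h0, Matrix.diagonal_one, mul_one, hWW]
  | succ k ih =>
    have hsp : Y = (hY.eigenvectorUnitary : Matrix (Fin n) (Fin n) ℂ)
        * Matrix.diagonal (Complex.ofReal ∘ hY.eigenvalues)
        * star (hY.eigenvectorUnitary : Matrix (Fin n) (Fin n) ℂ) := hY.spectral_theorem
    calc Y ^ (k + 1) = Y ^ k * Y := pow_succ Y k
      _ = (↑hY.eigenvectorUnitary * Matrix.diagonal (Complex.ofReal ∘ fun i => hY.eigenvalues i ^ k)
            * star (hY.eigenvectorUnitary : Matrix (Fin n) (Fin n) ℂ))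
          * (↑hY.eigenvectorUnitary * Matrix.diagonal (Complex.ofReal ∘ hY.eigenvalues)
            * star (hY.eigenvectorUnitary : Matrix (Fin n) (Fin n) ℂ)) := by
          rw [ih, ← hsp]
      _ = ↑hY.eigenvectorUnitary * (Matrix.diagonal (Complex.ofReal ∘ fun i => hY.eigenvalues i ^ k)
            * Matrix.diagonal (Complex.ofReal ∘ hY.eigenvalues))
            * star (hY.eigenvectorUnitary : Matrix (Fin n) (Fin n) ℂ) := conj_mul _ _
      _ = _ := by
          have hfun : (fun i => (Complex.ofReal ∘ fun i => hY.eigenvalues i ^ k) i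
              * (Complex.ofReal ∘ hY.eigenvalues) i)
              = (Complex.ofReal ∘ fun i => hY.eigenvalues i ^ (k + 1)) := by
            funext i
            simp [pow_succ]
          rw [Matrix.diagonal_mul_diagonal, hfun]

lemma herm_sum {Z : Matrix (Fin n) (Fin n) ℂ} (hZ : Z.IsHermitian) (f : ℝ → ℝ) :
    ∑ i, f (Real.sqrt ((Matrix.isHermitian_conjTranspose_mul_self Z).eigenvalues i))
      = ∑ i, f |hZ.eigenvalues i| := by
  have hZZ : Zᴴ * Z = (hZ.eigenvectorUnitary : Matrix (Fin n) (Fin n) ℂ)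
      * Matrix.diagonal (Complex.ofReal ∘ fun i => hZ.eigenvalues i ^ 2)
      * star (hZ.eigenvectorUnitary : Matrix (Fin n) (Fin n) ℂ) := by
    rw [hZ.eq, ← pow_two]
    exact spectral_pow hZ 2
  rw [sum_f_eig (Matrix.isHermitian_conjTranspose_mul_self Z) _ hZ.eigenvectorUnitary.2 _ hZZ
    (fun x => f (Real.sqrt x))]
  exact Finset.sum_congr rfl fun i _ => by rw [Real.sqrt_sq_eq_abs]

lemma minkowski_nat (k : ℕ) (hk : 1 ≤ k) (f g : Fin n → ℝ) (hf : ∀ i, 0 ≤ f i)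
    (hg : ∀ i, 0 ≤ g i) :
    (∑ i, (f i + g i) ^ k) ^ ((k : ℝ)⁻¹)
      ≤ (∑ i, f i ^ k) ^ ((k : ℝ)⁻¹) + (∑ i, g i ^ k) ^ ((k : ℝ)⁻¹) := by
  have e : ∀ (h : Fin n → ℝ), (∀ i, 0 ≤ h i) →
      ∑ i, |h i| ^ ((k : ℝ)) = ∑ i, h i ^ k := fun h hh =>
    Finset.sum_congr rfl fun i _ => by rw [abs_of_nonneg (hh i), Real.rpow_natCast]
  have := Real.Lp_add_le Finset.univ f g (p := (k : ℝ)) (by exact_mod_cast hk)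
  rw [e (fun i => f i + g i) (fun i => add_nonneg (hf i) (hg i)), e f hf, e g hg, one_div]
    at this
  exact this

lemma cs_nat (k : ℕ) (f g : Fin n → ℝ) (hf : ∀ i, 0 ≤ f i) (hg : ∀ i, 0 ≤ g i) :
    ∑ i, (f i * g i) ^ k
      ≤ Real.sqrt (∑ i, f i ^ (2 * k)) * Real.sqrt (∑ i, g i ^ (2 * k)) := by
  have e : ∀ (h : Fin n → ℝ), ∑ i, h i ^ (2 * k) = ∑ i, (h i ^ k) ^ 2 := fun h =>
    Finset.sum_congr rfl fun i _ => by rw [← pow_mul, mul_comm]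
  rw [e f, e g, ← Real.sqrt_mul (Finset.sum_nonneg fun i _ => sq_nonneg _)]
  have hx : 0 ≤ ∑ i, (f i * g i) ^ k :=
    Finset.sum_nonneg fun i _ => pow_nonneg (mul_nonneg (hf i) (hg i)) _
  rw [show (∑ i, (f i * g i) ^ k) = ∑ i, f i ^ k * g i ^ k from
    Finset.sum_congr rfl fun i _ => mul_pow _ _ _]
  refine (Real.le_sqrt (Finset.sum_nonneg fun i _ =>
    mul_nonneg (pow_nonneg (hf i) _) (pow_nonneg (hg i) _))
    (mul_nonneg (Finset.sum_nonneg fun i _ => sq_nonneg _)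
      (Finset.sum_nonneg fun i _ => sq_nonneg _))).mpr ?_
  exact Finset.sum_mul_sq_le_sq_mul_sq Finset.univ _ _

lemma norm_nat (k : ℕ) (A : Matrix (Fin n) (Fin n) ℂ) :
    schattenNorm (k : ℝ) A
      = (∑ i, Real.sqrt ((Matrix.isHermitian_conjTranspose_mul_self A).eigenvalues i) ^ k)
        ^ ((k : ℝ))⁻¹ := by
  rw [schattenNorm, one_div]
  congr 1
  exact Finset.sum_congr rfl fun i _ => Real.rpow_natCast _ k

lemma norm2M (M : ℕ) (A : Matrix (Fin n) (Fin n) ℂ) :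
    schattenNorm (2 * (M : ℝ)) A
      = (∑ i, ((Matrix.isHermitian_conjTranspose_mul_self A).eigenvalues i) ^ M)
        ^ (((2 * M : ℕ) : ℝ))⁻¹ := by
  have cast2M : (2 * (M : ℝ)) = ((2 * M : ℕ) : ℝ) := by push_cast; ring
  rw [cast2M, norm_nat (2 * M) A]
  congr 1
  refine Finset.sum_congr rfl fun i _ => ?_
  rw [pow_mul, Real.sq_sqrt (Matrix.eigenvalues_conjTranspose_mul_self_nonneg A i)]

lemma numeric_final : ∀ x y z c : ℝ, 0 ≤ x → 0 ≤ y → 0 ≤ z → 0 ≤ c → c ≤ 1 → y ≤ c * x →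
    z ≤ x + c * x → x * y + y * z ≤ 3 * c * x ^ 2 := by
  intro x y z c hx hy hz hc hcc hyx hzx
  nlinarith [mul_le_mul_of_nonneg_left hyx hx, mul_le_mul hyx hzx hz (mul_nonneg hc hx),
    mul_le_of_le_one_right hc hcc, sq_nonneg x, mul_nonneg hc hx]

end SB

set_option maxHeartbeats 2000000 in
open SB Matrix in
theorem schatten_sq_bound {n : ℕ} (η τ : Matrix (Fin n) (Fin n) ℂ)
    (hη : η.PosSemidef) (M : ℕ) (hM : 1 ≤ M) (ε : ℝ) (hε0 : 0 < ε) (hε1 : ε < 1)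
    (h : schattenNorm (2 * M) (η - τ) ≤ ε / M * schattenNorm (2 * M) η) :
    schattenNorm M (η ^ 2 - τ.conjTranspose * τ) ≤ 3 * ε / M * schattenNorm M (η ^ 2) := by
  classical
  have hMR : (0 : ℝ) < M := by exact_mod_cast Nat.lt_of_lt_of_le Nat.zero_lt_one hM
  have hMinv : (0 : ℝ) < ((M : ℝ))⁻¹ := by positivity
  have h2Minv : (0 : ℝ) < (((2 * M : ℕ) : ℝ))⁻¹ := by positivity
  -- the Hermitian matrix X
  set X : Matrix (Fin n) (Fin n) ℂ := η ^ 2 - τ.conjTranspose * τ with hXdef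
  have hX : X.IsHermitian :=
    Matrix.IsHermitian.sub (hη.pow 2).isHermitian (Matrix.isHermitian_conjTranspose_mul_self τ)
  -- power sums
  set Sη : ℝ := ∑ i, ((Matrix.isHermitian_conjTranspose_mul_self η).eigenvalues i) ^ M with hSηdef
  set Sd : ℝ := ∑ i, ((Matrix.isHermitian_conjTranspose_mul_self (η - τ)).eigenvalues i) ^ M
    with hSddef
  set Sτ : ℝ := ∑ i, ((Matrix.isHermitian_conjTranspose_mul_self τ).eigenvalues i) ^ M with hSτdef
  have hSη0 : 0 ≤ Sη := Finset.sum_nonneg fun i _ =>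
    pow_nonneg (Matrix.eigenvalues_conjTranspose_mul_self_nonneg η i) _
  have hSd0 : 0 ≤ Sd := Finset.sum_nonneg fun i _ =>
    pow_nonneg (Matrix.eigenvalues_conjTranspose_mul_self_nonneg (η - τ) i) _
  have hSτ0 : 0 ≤ Sτ := Finset.sum_nonneg fun i _ =>
    pow_nonneg (Matrix.eigenvalues_conjTranspose_mul_self_nonneg τ i) _
  -- Schatten 2M norms
  set N1 : ℝ := Sη ^ (((2 * M : ℕ) : ℝ))⁻¹ with hN1def
  set N2 : ℝ := Sd ^ (((2 * M : ℕ) : ℝ))⁻¹ with hN2def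
  set N3 : ℝ := Sτ ^ (((2 * M : ℕ) : ℝ))⁻¹ with hN3def
  have hN10 : 0 ≤ N1 := Real.rpow_nonneg hSη0 _
  have hN20 : 0 ≤ N2 := Real.rpow_nonneg hSd0 _
  have hN30 : 0 ≤ N3 := Real.rpow_nonneg hSτ0 _
  have hnorm1 : schattenNorm (2 * (M : ℝ)) η = N1 := norm2M M η
  have hnorm2 : schattenNorm (2 * (M : ℝ)) (η - τ) = N2 := norm2M M (η - τ)
  have hnorm3 : schattenNorm (2 * (M : ℝ)) τ = N3 := norm2M M τ
  rw [hnorm1, hnorm2] at h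
  -- triangle inequality : N3 ≤ N1 + N2
  have htri : N3 ≤ N1 + N2 := by
    set hτ' := Matrix.isHermitian_conjTranspose_mul_self τ with hτ'def
    set u : Fin n → Fin n → ℂ := fun i => ⇑(hτ'.eigenvectorBasis i) with hudef
    have eigval_u : ∀ i, hτ'.eigenvalues i = nsq (τ *ᵥ u i) := by
      intro i
      rw [hτ'.eigenvalues_eq i]
      exact quad_eq_nsq τ (u i)
    have sqrt_bound : ∀ i, Real.sqrt (hτ'.eigenvalues i)
        ≤ Real.sqrt (nsq (η *ᵥ u i)) + Real.sqrt (nsq ((η - τ) *ᵥ u i)) := by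
      intro i
      rw [eigval_u i]
      have e : τ *ᵥ u i = η *ᵥ u i - (η - τ) *ᵥ u i := by
        rw [Matrix.sub_mulVec]
        abel
      rw [e]
      exact sqrt_nsq_sub_le _ _
    have hSτ_le : Sτ ≤ ∑ i, (Real.sqrt (nsq (η *ᵥ u i))
        + Real.sqrt (nsq ((η - τ) *ᵥ u i))) ^ (2 * M) := by
      rw [hSτdef]
      refine Finset.sum_le_sum fun i _ => ?_
      have e1 : (hτ'.eigenvalues i) ^ M = Real.sqrt (hτ'.eigenvalues i) ^ (2 * M) := by
        rw [pow_mul, Real.sq_sqrt (Matrix.eigenvalues_conjTranspose_mul_self_nonneg τ i)]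
      rw [e1]
      exact pow_le_pow_left₀ (Real.sqrt_nonneg _) (sqrt_bound i) _
    have hmink := minkowski_nat (2 * M) (by omega)
      (fun i => Real.sqrt (nsq (η *ᵥ u i))) (fun i => Real.sqrt (nsq ((η - τ) *ᵥ u i)))
      (fun i => Real.sqrt_nonneg _) (fun i => Real.sqrt_nonneg _)
    have hA1 : ∑ i, Real.sqrt (nsq (η *ᵥ u i)) ^ (2 * M) ≤ Sη := by
      have e : ∀ i, Real.sqrt (nsq (η *ᵥ u i)) ^ (2 * M) = (nsq (η *ᵥ u i)) ^ M := by
        intro i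
        rw [pow_mul, Real.sq_sqrt (nsq_nonneg _)]
      rw [Finset.sum_congr rfl fun i _ => e i]
      exact lemmaA η _ hτ' M
    have hA2 : ∑ i, Real.sqrt (nsq ((η - τ) *ᵥ u i)) ^ (2 * M) ≤ Sd := by
      have e : ∀ i, Real.sqrt (nsq ((η - τ) *ᵥ u i)) ^ (2 * M) = (nsq ((η - τ) *ᵥ u i)) ^ M := by
        intro i
        rw [pow_mul, Real.sq_sqrt (nsq_nonneg _)]
      rw [Finset.sum_congr rfl fun i _ => e i]
      exact lemmaA (η - τ) _ hτ' M
    calc N3 ≤ (∑ i, (Real.sqrt (nsq (η *ᵥ u i)) + Real.sqrt (nsq ((η - τ) *ᵥ u i))) ^ (2 * M))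
          ^ (((2 * M : ℕ) : ℝ))⁻¹ := Real.rpow_le_rpow hSτ0 hSτ_le (le_of_lt h2Minv)
      _ ≤ (∑ i, Real.sqrt (nsq (η *ᵥ u i)) ^ (2 * M)) ^ (((2 * M : ℕ) : ℝ))⁻¹
          + (∑ i, Real.sqrt (nsq ((η - τ) *ᵥ u i)) ^ (2 * M)) ^ (((2 * M : ℕ) : ℝ))⁻¹ := hmink
      _ ≤ N1 + N2 := add_le_add
          (Real.rpow_le_rpow (Finset.sum_nonneg fun i _ => pow_nonneg (Real.sqrt_nonneg _) _)
            hA1 h2Minv.le)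
          (Real.rpow_le_rpow (Finset.sum_nonneg fun i _ => pow_nonneg (Real.sqrt_nonneg _) _)
            hA2 h2Minv.le)
  -- eigenbasis of X
  set v : Fin n → Fin n → ℂ := fun i => ⇑(hX.eigenvectorBasis i) with hvdef
  set lam : Fin n → ℝ := hX.eigenvalues with hlamdef
  set aa : Fin n → ℝ := fun i => Real.sqrt (nsq (η *ᵥ v i)) with haadef
  set dd : Fin n → ℝ := fun i => Real.sqrt (nsq ((η - τ) *ᵥ v i)) with hdddef
  set cc : Fin n → ℝ := fun i => Real.sqrt (nsq (τ *ᵥ v i)) with hccdef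
  have lam_bound : ∀ i, |lam i| ≤ aa i * dd i + dd i * cc i := by
    intro i
    have hdecomp : X = η * (η - τ) + (η - τ)ᴴ * τ := by
      rw [hXdef, Matrix.conjTranspose_sub, hη.1]
      noncomm_ring
    have hle : lam i = (dotProduct (star (v i)) (X *ᵥ v i)).re :=
      hX.eigenvalues_eq i
    have t1 : dotProduct (star (v i)) ((η * (η - τ)) *ᵥ v i)
        = dotProduct (star (η *ᵥ v i)) ((η - τ) *ᵥ v i) := by
      rw [← Matrix.mulVec_mulVec, Matrix.dotProduct_mulVec]
      congr 1
      rw [Matrix.star_mulVec, hη.1]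
    have t2 : dotProduct (star (v i)) (((η - τ)ᴴ * τ) *ᵥ v i)
        = dotProduct (star ((η - τ) *ᵥ v i)) (τ *ᵥ v i) := by
      rw [← Matrix.mulVec_mulVec, Matrix.dotProduct_mulVec]
      congr 1
      rw [Matrix.star_mulVec]
    rw [hle, hdecomp, Matrix.add_mulVec, dotProduct_add, Complex.add_re, t1, t2]
    calc |(dotProduct (star (η *ᵥ v i)) ((η - τ) *ᵥ v i)).re
          + (dotProduct (star ((η - τ) *ᵥ v i)) (τ *ᵥ v i)).re|
        ≤ |(dotProduct (star (η *ᵥ v i)) ((η - τ) *ᵥ v i)).re|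
          + |(dotProduct (star ((η - τ) *ᵥ v i)) (τ *ᵥ v i)).re| := abs_add_le _ _
      _ ≤ aa i * dd i + dd i * cc i := add_le_add (abs_re_dot_le _ _) (abs_re_dot_le _ _)
  -- Lemma A instances for the basis v
  have powAux : ∀ (B : Matrix (Fin n) (Fin n) ℂ),
      ∑ i, Real.sqrt (nsq (B *ᵥ v i)) ^ (2 * M)
        ≤ ∑ i, ((Matrix.isHermitian_conjTranspose_mul_self B).eigenvalues i) ^ M := by
    intro B
    have e : ∀ i, Real.sqrt (nsq (B *ᵥ v i)) ^ (2 * M) = (nsq (B *ᵥ v i)) ^ M := by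
      intro i
      rw [pow_mul, Real.sq_sqrt (nsq_nonneg _)]
    rw [Finset.sum_congr rfl fun i _ => e i]
    exact lemmaA B _ hX M
  have cs1 : ∑ i, (aa i * dd i) ^ M ≤ Real.sqrt Sη * Real.sqrt Sd := by
    calc ∑ i, (aa i * dd i) ^ M
        ≤ Real.sqrt (∑ i, aa i ^ (2 * M)) * Real.sqrt (∑ i, dd i ^ (2 * M)) :=
          cs_nat M aa dd (fun i => Real.sqrt_nonneg _) (fun i => Real.sqrt_nonneg _)
      _ ≤ Real.sqrt Sη * Real.sqrt Sd :=
          mul_le_mul (Real.sqrt_le_sqrt (powAux η)) (Real.sqrt_le_sqrt (powAux (η - τ)))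
            (Real.sqrt_nonneg _) (Real.sqrt_nonneg _)
  have cs2 : ∑ i, (dd i * cc i) ^ M ≤ Real.sqrt Sd * Real.sqrt Sτ := by
    calc ∑ i, (dd i * cc i) ^ M
        ≤ Real.sqrt (∑ i, dd i ^ (2 * M)) * Real.sqrt (∑ i, cc i ^ (2 * M)) :=
          cs_nat M dd cc (fun i => Real.sqrt_nonneg _) (fun i => Real.sqrt_nonneg _)
      _ ≤ Real.sqrt Sd * Real.sqrt Sτ :=
          mul_le_mul (Real.sqrt_le_sqrt (powAux (η - τ))) (Real.sqrt_le_sqrt (powAux τ))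
            (Real.sqrt_nonneg _) (Real.sqrt_nonneg _)
  -- rpow algebra
  have rpow_half : ∀ (S : ℝ), 0 ≤ S →
      (Real.sqrt S) ^ ((M : ℝ))⁻¹ = S ^ (((2 * M : ℕ) : ℝ))⁻¹ := by
    intro S hS
    rw [Real.sqrt_eq_rpow, ← Real.rpow_mul hS]
    congr 1
    push_cast
    rw [mul_inv]
    ring
  have hmul : ∀ S T : ℝ, 0 ≤ S → 0 ≤ T →
      (Real.sqrt S * Real.sqrt T) ^ ((M : ℝ))⁻¹
        = S ^ (((2 * M : ℕ) : ℝ))⁻¹ * T ^ (((2 * M : ℕ) : ℝ))⁻¹ := by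
    intro S T hS hT
    rw [Real.mul_rpow (Real.sqrt_nonneg _) (Real.sqrt_nonneg _), rpow_half S hS, rpow_half T hT]
  -- main chain
  have main : (∑ i, |lam i| ^ M) ^ ((M : ℝ))⁻¹ ≤ N1 * N2 + N2 * N3 := by
    calc (∑ i, |lam i| ^ M) ^ ((M : ℝ))⁻¹
        ≤ (∑ i, (aa i * dd i + dd i * cc i) ^ M) ^ ((M : ℝ))⁻¹ :=
          Real.rpow_le_rpow (Finset.sum_nonneg fun i _ => pow_nonneg (abs_nonneg _) _)
            (Finset.sum_le_sum fun i _ => pow_le_pow_left₀ (abs_nonneg _) (lam_bound i) M)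
            hMinv.le
      _ ≤ (∑ i, (aa i * dd i) ^ M) ^ ((M : ℝ))⁻¹ + (∑ i, (dd i * cc i) ^ M) ^ ((M : ℝ))⁻¹ :=
          minkowski_nat M hM (fun i => aa i * dd i) (fun i => dd i * cc i)
            (fun i => mul_nonneg (Real.sqrt_nonneg _) (Real.sqrt_nonneg _))
            (fun i => mul_nonneg (Real.sqrt_nonneg _) (Real.sqrt_nonneg _))
      _ ≤ (Real.sqrt Sη * Real.sqrt Sd) ^ ((M : ℝ))⁻¹
          + (Real.sqrt Sd * Real.sqrt Sτ) ^ ((M : ℝ))⁻¹ := add_le_add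
            (Real.rpow_le_rpow (Finset.sum_nonneg fun i _ =>
              pow_nonneg (mul_nonneg (Real.sqrt_nonneg _) (Real.sqrt_nonneg _)) _) cs1 hMinv.le)
            (Real.rpow_le_rpow (Finset.sum_nonneg fun i _ =>
              pow_nonneg (mul_nonneg (Real.sqrt_nonneg _) (Real.sqrt_nonneg _)) _) cs2 hMinv.le)
      _ = N1 * N2 + N2 * N3 := by
          rw [hmul Sη Sd hSη0 hSd0, hmul Sd Sτ hSd0 hSτ0]
  -- identify the two Schatten M-norms
  have hLHS : schattenNorm (M : ℝ) X = (∑ i, |lam i| ^ M) ^ ((M : ℝ))⁻¹ := by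
    rw [norm_nat M X]
    congr 1
    exact herm_sum hX (fun x => x ^ M)
  have hRHS : schattenNorm (M : ℝ) (η ^ 2) = Sη ^ ((M : ℝ))⁻¹ := by
    rw [norm_nat M (η ^ 2)]
    congr 1
    have h4 : (η ^ 2)ᴴ * (η ^ 2)
        = (hη.1.eigenvectorUnitary : Matrix (Fin n) (Fin n) ℂ)
          * Matrix.diagonal (Complex.ofReal ∘ fun i => hη.1.eigenvalues i ^ 4)
          * star (hη.1.eigenvectorUnitary : Matrix (Fin n) (Fin n) ℂ) := by
      rw [Matrix.conjTranspose_pow, hη.1, ← pow_add]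
      exact spectral_pow hη.1 4
    have h2 : ηᴴ * η
        = (hη.1.eigenvectorUnitary : Matrix (Fin n) (Fin n) ℂ)
          * Matrix.diagonal (Complex.ofReal ∘ fun i => hη.1.eigenvalues i ^ 2)
          * star (hη.1.eigenvectorUnitary : Matrix (Fin n) (Fin n) ℂ) := by
      rw [hη.1, ← pow_two]
      exact spectral_pow hη.1 2
    rw [sum_f_eig (Matrix.isHermitian_conjTranspose_mul_self (η ^ 2)) _
      hη.1.eigenvectorUnitary.2 _ h4 (fun x => Real.sqrt x ^ M)]
    rw [hSηdef, sum_f_eig (Matrix.isHermitian_conjTranspose_mul_self η) _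
      hη.1.eigenvectorUnitary.2 _ h2 (fun x => x ^ M)]
    refine Finset.sum_congr rfl fun i _ => ?_
    have e4 : Real.sqrt (hη.1.eigenvalues i ^ 4) = hη.1.eigenvalues i ^ 2 := by
      rw [show (hη.1.eigenvalues i) ^ 4 = ((hη.1.eigenvalues i) ^ 2) ^ 2 by ring,
        Real.sqrt_sq (sq_nonneg _)]
    rw [e4]
  -- final numeric argument
  have hc0 : 0 ≤ ε / (M : ℝ) := by positivity
  have hc1 : ε / (M : ℝ) ≤ 1 := by
    rw [div_le_one hMR]
    calc ε ≤ 1 := hε1.le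
      _ ≤ (M : ℝ) := by exact_mod_cast hM
  have hN1sq : N1 ^ 2 = Sη ^ ((M : ℝ))⁻¹ := by
    rw [hN1def, ← Real.rpow_natCast (Sη ^ (((2 * M : ℕ) : ℝ))⁻¹) 2, ← Real.rpow_mul hSη0]
    congr 1
    push_cast
    rw [mul_inv]
    field_simp
  have hN3' : N3 ≤ N1 + ε / ↑M * N1 := htri.trans (by linarith)
  have hfin : N1 * N2 + N2 * N3 ≤ 3 * ε / ↑M * N1 ^ 2 := by
    have h3 : (3 : ℝ) * ε / ↑M * N1 ^ 2 = 3 * (ε / ↑M) * N1 ^ 2 := by ring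
    rw [h3]
    exact SB.numeric_final N1 N2 N3 (ε / ↑M) hN10 hN20 hN30 hc0 hc1 h hN3'
  calc schattenNorm (M : ℝ) X = (∑ i, |lam i| ^ M) ^ ((M : ℝ))⁻¹ := hLHS
    _ ≤ N1 * N2 + N2 * N3 := main
    _ ≤ 3 * ε / ↑M * N1 ^ 2 := hfin
    _ = 3 * ε / ↑M * schattenNorm (M : ℝ) (η ^ 2) := by rw [hN1sq, hRHS]
end

section
/- Trotter error for matrices: if H = ∑_{i=1}^K h_i is a sum of K Hermitian matrices each with operator norm ‖h_i‖ ≤ 1, β > 0, 0 < ε < 1, and M > 36β²K²/ε (with M also exceeding 3βK), then ‖e^{−βH/2M} − ∏_{i=1}^K e^{−βh_i/2M}‖ ≤ ε/(3M) in operator norm. -/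
open scoped Matrix.Norms.L2Operator

lemma real_exp_tail (a : ℝ) :
    Real.exp a - 1 - a = ∑' k : ℕ, a ^ (k + 2) / (k + 2).factorial := by
  have hsum : Summable (fun k : ℕ => a ^ k / k.factorial) := Real.summable_pow_div_factorial a
  have : Real.exp a = ∑' k : ℕ, a ^ k / k.factorial := by
    rw [Real.exp_eq_exp_ℝ, NormedSpace.exp_eq_tsum_div]
  rw [this, Summable.tsum_eq_zero_add hsum, Summable.tsum_eq_zero_add ((summable_nat_add_iff 1).mpr hsum)]
  simp [Nat.factorial]

lemma exp_tail_mono {a t : ℝ} (ha : 0 ≤ a) (hat : a ≤ t) :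
    Real.exp a - 1 - a ≤ Real.exp t - 1 - t := by
  have h1 : Real.exp t = Real.exp a * Real.exp (t - a) := by
    rw [← Real.exp_add]; ring_nf
  nlinarith [Real.add_one_le_exp (t - a), Real.one_le_exp ha, Real.exp_pos a]

section General

variable {A : Type*} [NormedRing A] [NormedAlgebra ℝ A] [CompleteSpace A]

set_option maxHeartbeats 1000000 in
lemma exp_remainder (X : A) :
    ‖NormedSpace.exp X - 1 - X‖ ≤ Real.exp ‖X‖ - 1 - ‖X‖ := by
  have hs : Summable fun k : ℕ => ‖((k.factorial : ℝ))⁻¹ • X ^ k‖ :=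
    NormedSpace.norm_expSeries_summable' X
  have hsum := hs.of_norm
  have key : NormedSpace.exp X - 1 - X
      = ∑' k : ℕ, (((k + 2).factorial : ℝ))⁻¹ • X ^ (k + 2) := by
    have h0 : NormedSpace.exp X = ∑' k : ℕ, ((k.factorial : ℝ))⁻¹ • X ^ k := by
      rw [NormedSpace.exp_eq_tsum ℝ]
    rw [h0, Summable.tsum_eq_zero_add hsum, Summable.tsum_eq_zero_add ((summable_nat_add_iff 1).mpr hsum)]
    simp [Nat.factorial]
  rw [key, real_exp_tail]
  have hns : Summable fun k : ℕ => ‖(((k + 2).factorial : ℝ))⁻¹ • X ^ (k + 2)‖ :=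
    (summable_nat_add_iff 2).mpr hs
  refine (norm_tsum_le_tsum_norm hns).trans (Summable.tsum_le_tsum ?_ hns
    ((summable_nat_add_iff 2).mpr (Real.summable_pow_div_factorial ‖X‖)))
  intro k
  rw [norm_smul, norm_inv, Real.norm_natCast, inv_mul_eq_div,
    div_le_div_iff₀ (by positivity) (by positivity)]
  have := norm_pow_le' X (n := k + 2) (by omega)
  nlinarith [(Nat.cast_pos (α := ℝ)).mpr (Nat.factorial_pos (k+2)), norm_nonneg (X ^ (k+2))]

variable [NormOneClass A]

lemma norm_exp_le' (X : A) : ‖NormedSpace.exp X‖ ≤ Real.exp ‖X‖ := by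
  have h := exp_remainder X
  have hX : NormedSpace.exp X = (NormedSpace.exp X - 1 - X) + 1 + X := by abel
  rw [hX]
  calc ‖_ + 1 + X‖ ≤ ‖NormedSpace.exp X - 1 - X + 1‖ + ‖X‖ := norm_add_le _ _
    _ ≤ ‖NormedSpace.exp X - 1 - X‖ + ‖(1 : A)‖ + ‖X‖ := by
        gcongr; exact norm_add_le _ _
    _ ≤ _ := by rw [norm_one]; linarith

lemma norm_exp_sub_one_le' (X : A) : ‖NormedSpace.exp X - 1‖ ≤ Real.exp ‖X‖ - 1 := by
  have h := exp_remainder X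
  have hX : NormedSpace.exp X - 1 = (NormedSpace.exp X - 1 - X) + X := by abel
  rw [hX]
  calc ‖_ + X‖ ≤ ‖NormedSpace.exp X - 1 - X‖ + ‖X‖ := norm_add_le _ _
    _ ≤ _ := by linarith

lemma norm_list_sum_le' {t : ℝ} (ht : 0 ≤ t) :
    ∀ L : List A, (∀ x ∈ L, ‖x‖ ≤ t) → ‖L.sum‖ ≤ L.length * t := by
  intro L
  induction L with
  | nil => intro _; simp
  | cons X L ih =>
    intro hL
    have h1 : ‖X‖ ≤ t := hL X (by simp)
    have h2 := ih (fun x hx => hL x (by simp [hx]))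
    simp only [List.sum_cons, List.length_cons]
    push_cast
    calc ‖X + L.sum‖ ≤ ‖X‖ + ‖L.sum‖ := norm_add_le _ _
      _ ≤ _ := by linarith

lemma list_prod_exp_sub {t : ℝ} (ht : 0 ≤ t) :
    ∀ L : List A, (∀ x ∈ L, ‖x‖ ≤ t) →
      ‖(L.map (NormedSpace.exp)).prod - 1 - L.sum‖
        ≤ Real.exp (L.length * t) - 1 - L.length * t := by
  intro L
  induction L with
  | nil => intro _; simp
  | cons X L ih =>
    intro hL
    have hX : ‖X‖ ≤ t := hL X (by simp)
    have hrest : ∀ x ∈ L, ‖x‖ ≤ t := fun x hx => hL x (by simp [hx])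
    have ihh := ih hrest
    have hTsum : ‖L.sum‖ ≤ L.length * t := norm_list_sum_le' ht L hrest
    have key : NormedSpace.exp X * (L.map (NormedSpace.exp)).prod - 1 - (X + L.sum)
        = NormedSpace.exp X * ((L.map (NormedSpace.exp)).prod - 1 - L.sum)
          + (NormedSpace.exp X - 1 - X) + (NormedSpace.exp X - 1) * L.sum := by
      noncomm_ring
    simp only [List.map_cons, List.prod_cons, List.sum_cons, List.length_cons]
    rw [key]
    have b1 : ‖NormedSpace.exp X * ((L.map (NormedSpace.exp)).prod - 1 - L.sum)‖
        ≤ Real.exp t * (Real.exp (L.length * t) - 1 - L.length * t) := by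
      refine (norm_mul_le _ _).trans ?_
      have h1 : ‖NormedSpace.exp X‖ ≤ Real.exp t :=
        (norm_exp_le' X).trans (Real.exp_le_exp.mpr hX)
      exact mul_le_mul h1 ihh (norm_nonneg _) (by positivity)
    have b2 : ‖NormedSpace.exp X - 1 - X‖ ≤ Real.exp t - 1 - t :=
      (exp_remainder X).trans (exp_tail_mono (norm_nonneg X) hX)
    have b3 : ‖(NormedSpace.exp X - 1) * L.sum‖ ≤ (Real.exp t - 1) * (L.length * t) := by
      refine (norm_mul_le _ _).trans ?_
      have h1 : ‖NormedSpace.exp X - 1‖ ≤ Real.exp t - 1 :=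
        (norm_exp_sub_one_le' X).trans (by linarith [Real.exp_le_exp.mpr hX])
      have h2 : (0:ℝ) ≤ (L.length : ℝ) * t := by positivity
      exact mul_le_mul h1 hTsum (norm_nonneg _) (by nlinarith [Real.one_le_exp ht])
    have hsplit : Real.exp ((L.length + 1 : ℝ) * t) = Real.exp t * Real.exp (L.length * t) := by
      rw [← Real.exp_add]; ring_nf
    calc ‖_ + _ + (NormedSpace.exp X - 1) * L.sum‖
        ≤ ‖NormedSpace.exp X * ((L.map (NormedSpace.exp)).prod - 1 - L.sum)
            + (NormedSpace.exp X - 1 - X)‖ + ‖(NormedSpace.exp X - 1) * L.sum‖ :=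
          norm_add_le _ _
      _ ≤ ‖NormedSpace.exp X * ((L.map (NormedSpace.exp)).prod - 1 - L.sum)‖
          + ‖NormedSpace.exp X - 1 - X‖ + ‖(NormedSpace.exp X - 1) * L.sum‖ := by
          gcongr; exact norm_add_le _ _
      _ ≤ _ := by
          push_cast
          rw [hsplit]
          nlinarith [b1, b2, b3]

end General

/-- Trotter error in operator norm. -/
theorem trotter_error {n K : ℕ} (h : Fin K → Matrix (Fin n) (Fin n) ℂ)
    (hherm : ∀ i, (h i).IsHermitian) (hnorm : ∀ i, ‖h i‖ ≤ 1)
    (β : ℝ) (hβ : 0 < β) (ε : ℝ) (hε0 : 0 < ε) (hε1 : ε < 1)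
    (M : ℕ) (hM : (M : ℝ) > 36 * β ^ 2 * K ^ 2 / ε) (hM' : (M : ℝ) > 3 * β * K) :
    ‖NormedSpace.exp ((-(β / (2 * M))) • ∑ i, h i) -
        (List.ofFn (fun i => NormedSpace.exp ((-(β / (2 * M))) • h i))).prod‖ ≤
      ε / (3 * M) := by
  have hMpos : (0:ℝ) < M := lt_of_le_of_lt (by positivity) hM'
  rcases Nat.eq_zero_or_pos n with hn | hn
  · subst hn
    have h0 : (NormedSpace.exp ((-(β / (2 * M))) • ∑ i, h i) -
        (List.ofFn (fun i => NormedSpace.exp ((-(β / (2 * M))) • h i))).prod)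
        = 0 := Subsingleton.elim _ _
    rw [h0, norm_zero]
    positivity
  haveI : NeZero n := ⟨by omega⟩
  set t : ℝ := β / (2 * M) with ht_def
  have ht : 0 ≤ t := by positivity
  set L : List (Matrix (Fin n) (Fin n) ℂ) := List.ofFn (fun i => (-(β / (2 * M))) • h i) with hL_def
  have hmap : List.ofFn (fun i => NormedSpace.exp ((-(β / (2 * M))) • h i))
      = L.map (NormedSpace.exp) := by rw [hL_def, List.map_ofFn]; rfl
  have hsumL : L.sum = (-(β / (2 * M))) • ∑ i, h i := by
    rw [hL_def, List.sum_ofFn, ← Finset.smul_sum]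
  have hlen : L.length = K := List.length_ofFn
  have hbound : ∀ x ∈ L, ‖x‖ ≤ t := by
    intro x hx
    rw [hL_def, List.mem_ofFn] at hx
    obtain ⟨i, rfl⟩ := hx
    rw [norm_smul, norm_neg, Real.norm_of_nonneg ht]
    calc t * ‖h i‖ ≤ t * 1 := by gcongr; exact hnorm i
      _ = t := mul_one t
  set S := (-(β / (2 * M))) • ∑ i, h i with hS_def
  have hSnorm : ‖S‖ ≤ K * t := by
    rw [← hsumL]
    simpa [hlen] using norm_list_sum_le' ht L hbound
  have e1 : ‖NormedSpace.exp S - 1 - S‖ ≤ Real.exp (K * t) - 1 - K * t :=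
    (exp_remainder S).trans (exp_tail_mono (norm_nonneg S) hSnorm)
  have e2 : ‖(L.map (NormedSpace.exp)).prod - 1 - S‖ ≤ Real.exp (K * t) - 1 - K * t := by
    rw [← hsumL]
    simpa [hlen] using list_prod_exp_sub ht L hbound
  have hsplit : NormedSpace.exp S - (L.map (NormedSpace.exp)).prod
      = (NormedSpace.exp S - 1 - S) - ((L.map (NormedSpace.exp)).prod - 1 - S) := by abel
  rw [hmap]
  have key : ‖NormedSpace.exp S - (L.map (NormedSpace.exp)).prod‖
      ≤ 2 * (Real.exp (K * t) - 1 - K * t) := by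
    rw [hsplit]
    calc ‖_ - _‖ ≤ ‖NormedSpace.exp S - 1 - S‖ + ‖(L.map (NormedSpace.exp)).prod - 1 - S‖ :=
        norm_sub_le _ _
      _ ≤ _ := by linarith
  refine key.trans ?_
  -- numeric part
  set s : ℝ := K * t with hs_def
  have hs0 : 0 ≤ s := by positivity
  have hs1 : s ≤ 1 := by
    rw [hs_def, ht_def]
    rw [← mul_div_assoc, div_le_one (by positivity)]
    nlinarith
  have hq : Real.exp s - 1 - s ≤ s ^ 2 * (3 / 4) := by
    have := Real.exp_bound (x := s) (by rw [abs_of_nonneg hs0]; exact hs1) (n := 2) (by norm_num)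
    rw [abs_of_nonneg hs0] at this
    have h2 : ∑ m ∈ Finset.range 2, s ^ m / m.factorial = 1 + s := by
      simp [Finset.sum_range_succ, Nat.factorial]
    rw [h2] at this
    have := abs_le.mp this
    norm_num at this ⊢
    linarith [this.2]
  have hMε : 36 * β ^ 2 * K ^ 2 < M * ε := by
    rw [gt_iff_lt, div_lt_iff₀ hε0] at hM
    exact hM
  have hsq : s = β * K / (2 * M) := by rw [hs_def, ht_def]; ring
  rw [hsq] at hq hs0
  have hfin : 2 * ((β * K / (2 * M)) ^ 2 * (3 / 4)) ≤ ε / (3 * M) := by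
    have hrw : 2 * ((β * K / (2 * M)) ^ 2 * (3 / 4)) = 3 * (β * K) ^ 2 / (8 * M ^ 2) := by
      field_simp; ring
    rw [hrw, div_le_div_iff₀ (by positivity) (by positivity)]
    nlinarith [mul_lt_mul_of_pos_left hMε hMpos, hMpos, hε0, sq_nonneg (β * (K:ℝ))]
  calc 2 * (Real.exp s - 1 - s) ≤ 2 * ((β * K / (2 * M)) ^ 2 * (3 / 4)) := by
        rw [hsq]; linarith
    _ ≤ ε / (3 * M) := hfin
end

section
/- Second-order Trotter term bound: let h₁,…,h_K be matrices with ‖h_i‖ ≤ 1, β > 0, M ≥ 3βK, and set x_i = e^{−βh_i/2M} − I. Then ‖∏_{i=1}^K (I + x_i) − I + (β/2M)∑_i h_i‖ ≤ 6K²β²/M². -/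
open scoped Matrix.Norms.L2Operator

/-- Tail bound for the exponential series in a Banach algebra. -/
lemma tsubty_exp_tail {𝔸 : Type*} [NormedRing 𝔸] [NormedAlgebra ℝ 𝔸] [CompleteSpace 𝔸]
    (x : 𝔸) (k : ℕ) (hk : 0 < k) :
    ‖NormedSpace.exp x - ∑ i ∈ Finset.range k, (i.factorial⁻¹ : ℝ) • x ^ i‖ ≤
      Real.exp ‖x‖ - ∑ i ∈ Finset.range k, ‖x‖ ^ i / i.factorial := by
  set f : ℕ → 𝔸 := fun n => (n.factorial⁻¹ : ℝ) • x ^ n with hf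
  set g : ℕ → ℝ := fun n => ‖x‖ ^ n / n.factorial with hg
  have hfs : Summable f := NormedSpace.expSeries_summable' (𝕂 := ℝ) x
  have hgs : Summable g := Real.summable_pow_div_factorial ‖x‖
  have hfe : NormedSpace.exp x = ∑' n, f n := by
    rw [NormedSpace.exp_eq_tsum ℝ]
  have hge : Real.exp ‖x‖ = ∑' n, g n := by
    rw [Real.exp_eq_exp_ℝ, NormedSpace.exp_eq_tsum ℝ]
    simp [g, smul_eq_mul, inv_mul_eq_div]
  have h1 : NormedSpace.exp x - ∑ i ∈ Finset.range k, f i = ∑' n, f (n + k) := by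
    rw [hfe, ← Summable.sum_add_tsum_nat_add k hfs]; exact add_sub_cancel_left _ _
  have h2 : Real.exp ‖x‖ - ∑ i ∈ Finset.range k, g i = ∑' n, g (n + k) := by
    rw [hge, ← Summable.sum_add_tsum_nat_add k hgs]; exact add_sub_cancel_left _ _
  rw [show (∑ i ∈ Finset.range k, (i.factorial⁻¹ : ℝ) • x ^ i) = ∑ i ∈ Finset.range k, f i
      from rfl,
    show (∑ i ∈ Finset.range k, ‖x‖ ^ i / i.factorial) = ∑ i ∈ Finset.range k, g i from rfl,
    h1, h2]
  have hfn : Summable fun n => ‖f (n + k)‖ :=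
    ((summable_nat_add_iff k).2 (NormedSpace.norm_expSeries_summable' (𝕂 := ℝ) x))
  refine (norm_tsum_le_tsum_norm hfn).trans (Summable.tsum_le_tsum ?_ hfn ((summable_nat_add_iff k).2 hgs))
  intro m
  have hp : ‖x ^ (m + k)‖ ≤ ‖x‖ ^ (m + k) := norm_pow_le' x (by omega)
  calc ‖f (m + k)‖ = ((m + k).factorial : ℝ)⁻¹ * ‖x ^ (m + k)‖ := by
        rw [hf, norm_smul, Real.norm_eq_abs, abs_of_nonneg (by positivity)]
    _ ≤ ((m + k).factorial : ℝ)⁻¹ * ‖x‖ ^ (m + k) := by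
        gcongr
    _ = g (m + k) := by rw [hg]; ring

lemma tsubty_list_prod_bound {A : Type*} [NormedRing A] (δ : ℝ) (hδ : 0 ≤ δ) :
    ∀ l : List A, (∀ y ∈ l, ‖y‖ ≤ δ) →
      ‖(l.map (fun y => 1 + y)).prod - 1‖ ≤ (1 + δ) ^ l.length - 1 ∧
      ‖(l.map (fun y => 1 + y)).prod - 1 - l.sum‖ ≤ (1 + δ) ^ l.length - 1 - l.length * δ
  | [], _ => by simp
  | y :: l, hl => by
    obtain ⟨hE, hD⟩ := tsubty_list_prod_bound δ hδ l
      (fun z hz => hl z (List.mem_cons_of_mem _ hz))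
    have hy : ‖y‖ ≤ δ := hl y List.mem_cons_self
    set P := (l.map (fun y => 1 + y)).prod with hP
    have hEnn : (0:ℝ) ≤ ‖P - 1‖ := norm_nonneg _
    have hpow : (1:ℝ) ≤ (1 + δ) ^ l.length := one_le_pow₀ (by linarith)
    have hlen : (0:ℝ) ≤ (l.length : ℝ) := Nat.cast_nonneg _
    constructor
    · have key : (1 + y) * P - 1 = (P - 1) + y * (P - 1) + y := by noncomm_ring
      simp only [List.map_cons, List.prod_cons, List.length_cons, ← hP, key]
      have h1 : ‖(P - 1) + y * (P - 1) + y‖ ≤ ‖P - 1‖ + ‖y‖ * ‖P - 1‖ + ‖y‖ :=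
        (norm_add_le _ _).trans (by gcongr; exact (norm_add_le _ _).trans (by gcongr; exact norm_mul_le _ _))
      refine h1.trans ?_
      have : (1 + δ) ^ (l.length + 1) = (1 + δ) * (1 + δ) ^ l.length := by ring
      rw [this]
      nlinarith [norm_nonneg y]
    · have key : (1 + y) * P - 1 - (y :: l).sum = (P - 1 - l.sum) + y * (P - 1) := by
        simp only [List.sum_cons]; noncomm_ring
      simp only [List.map_cons, List.prod_cons, List.length_cons] at *
      rw [key]
      have h1 : ‖(P - 1 - l.sum) + y * (P - 1)‖ ≤ ‖P - 1 - l.sum‖ + ‖y‖ * ‖P - 1‖ :=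
        (norm_add_le _ _).trans (by gcongr; exact norm_mul_le _ _)
      refine h1.trans ?_
      have : (1 + δ) ^ (l.length + 1) = (1 + δ) * (1 + δ) ^ l.length := by ring
      rw [this]
      push_cast
      nlinarith [norm_nonneg y]


set_option maxHeartbeats 1000000 in
/-- Second-order bound for the Trotter product expansion. -/
theorem trotter_second_order {n K : ℕ} (h : Fin K → Matrix (Fin n) (Fin n) ℂ)
    (hnorm : ∀ i, ‖h i‖ ≤ 1) (β : ℝ) (hβ : 0 < β) (M : ℕ) (hM : (M : ℝ) ≥ 3 * β * K)
    (x : Fin K → Matrix (Fin n) (Fin n) ℂ)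
    (hx : ∀ i, x i = NormedSpace.exp ((-(β / (2 * M))) • h i) - 1) :
    ‖(List.ofFn (fun i => 1 + x i)).prod - 1 + (β / (2 * M)) • ∑ i, h i‖ ≤
      6 * K ^ 2 * β ^ 2 / M ^ 2 := by
  rcases Nat.eq_zero_or_pos K with hK0 | hK
  · subst hK0
    simp only [List.ofFn_zero, List.prod_nil, Finset.univ_eq_empty, Finset.sum_empty,
      smul_zero, sub_self, zero_add, norm_zero, Nat.cast_zero]
    positivity
  have hK1 : (1:ℝ) ≤ K := by exact_mod_cast hK
  have hM0 : (0:ℝ) < M := lt_of_lt_of_le (by nlinarith) hM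
  set t := β / (2 * M) with ht
  have ht0 : 0 < t := by positivity
  have hKt : (K:ℝ) * t ≤ 1/6 := by
    rw [ht, show (K:ℝ) * (β / (2 * M)) = (K * β) / (2 * M) by ring,
      div_le_div_iff₀ (by positivity) (by norm_num)]
    nlinarith
  have ht1 : t ≤ 1/6 := le_trans (by nlinarith) hKt
  have hA : ∀ i, ‖(-(t)) • h i‖ ≤ t := by
    intro i
    rw [norm_smul, Real.norm_eq_abs, abs_neg, abs_of_pos ht0]
    nlinarith [hnorm i, norm_nonneg (h i)]
  set δ := Real.exp t - 1 with hδdef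
  have hδt : t ≤ δ := by have := Real.add_one_le_exp t; simp only [hδdef]; linarith
  have hδ0 : 0 ≤ δ := le_trans ht0.le hδt
  have hxb : ∀ i, ‖x i‖ ≤ δ := by
    intro i
    rw [hx i]
    have h1 := tsubty_exp_tail ((-(t)) • h i) 1 one_pos
    simp only [Finset.range_one, Finset.sum_singleton, Nat.factorial_zero, Nat.cast_one,
      inv_one, one_smul, pow_zero, div_one] at h1
    refine h1.trans ?_
    have := Real.exp_le_exp.mpr (hA i)
    simp only [hδdef]; linarith
  have hsecond : ∀ i, ‖x i + t • h i‖ ≤ (3/4) * t^2 := by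
    intro i
    have heq : x i + t • h i = NormedSpace.exp ((-(t)) • h i) -
        ∑ j ∈ Finset.range 2, ((j.factorial:ℝ)⁻¹) • ((-(t)) • h i) ^ j := by
      rw [hx i]
      simp [Finset.sum_range_succ, neg_smul]
      abel
    rw [heq]
    refine (tsubty_exp_tail _ 2 (by norm_num)).trans ?_
    set r := ‖(-(t)) • h i‖ with hr
    have hrt : r ≤ t := hA i
    have hr0 : 0 ≤ r := norm_nonneg _
    have hb := Real.exp_bound (x := r) (by rw [abs_of_nonneg hr0]; linarith) (n := 2)
      (by norm_num)
    rw [abs_of_nonneg hr0] at hb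
    have hb2 := (abs_le.mp hb).2
    norm_num [Finset.sum_range_succ, Nat.factorial] at hb2 ⊢
    have hrsq : r^2 ≤ t^2 := by nlinarith
    nlinarith [hb2]
  have hmem : ∀ y ∈ List.ofFn x, ‖y‖ ≤ δ := by
    intro y hy
    rw [List.mem_ofFn] at hy
    obtain ⟨i, rfl⟩ := hy
    exact hxb i
  obtain ⟨-, hD⟩ := tsubty_list_prod_bound δ hδ0 (List.ofFn x) hmem
  rw [List.map_ofFn, List.length_ofFn, List.sum_ofFn] at hD
  have hcomp : ((fun y => 1 + y) ∘ x) = fun i => 1 + x i := rfl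
  rw [hcomp] at hD
  have hmain : (List.ofFn (fun i => 1 + x i)).prod - 1 + t • ∑ i, h i
      = ((List.ofFn (fun i => 1 + x i)).prod - 1 - ∑ i, x i) + ∑ i, (x i + t • h i) := by
    rw [Finset.sum_add_distrib, Finset.smul_sum]; abel
  rw [hmain]
  have hsum : ‖∑ i, (x i + t • h i)‖ ≤ (K:ℝ) * ((3/4) * t^2) := by
    refine (norm_sum_le _ _).trans ?_
    calc ∑ i, ‖x i + t • h i‖ ≤ ∑ _i : Fin K, (3/4) * t^2 :=
          Finset.sum_le_sum (fun i _ => hsecond i)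
      _ = (K:ℝ) * ((3/4) * t^2) := by simp [mul_comm]
  have hexp : (1 + δ) ^ K = Real.exp ((K:ℝ) * t) := by
    rw [hδdef, show (1:ℝ) + (Real.exp t - 1) = Real.exp t by ring, ← Real.exp_nat_mul]
  have hebd := Real.exp_bound (x := (K:ℝ) * t)
    (by rw [abs_of_nonneg (by positivity)]; linarith) (n := 2) (by norm_num)
  rw [abs_of_nonneg (by positivity : (0:ℝ) ≤ (K:ℝ) * t)] at hebd
  have hebd2 := (abs_le.mp hebd).2
  norm_num [Finset.sum_range_succ, Nat.factorial] at hebd2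
  have hDfinal : ‖(List.ofFn (fun i => 1 + x i)).prod - 1 - ∑ i, x i‖ ≤
      (3/4) * ((K:ℝ) * t)^2 := by
    refine hD.trans ?_
    rw [hexp]
    nlinarith [hδt, hK1, hebd2, Nat.cast_nonneg (α := ℝ) K,
      mul_nonneg (Nat.cast_nonneg (α := ℝ) K) (by linarith : (0:ℝ) ≤ δ - t)]
  calc ‖((List.ofFn (fun i => 1 + x i)).prod - 1 - ∑ i, x i) + ∑ i, (x i + t • h i)‖
      ≤ ‖(List.ofFn (fun i => 1 + x i)).prod - 1 - ∑ i, x i‖ + ‖∑ i, (x i + t • h i)‖ :=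
        norm_add_le _ _
    _ ≤ (3/4) * ((K:ℝ) * t)^2 + (K:ℝ) * ((3/4) * t^2) := add_le_add hDfinal hsum
    _ ≤ 6 * K ^ 2 * β ^ 2 / M ^ 2 := by
        have htt : t ^ 2 * (4 * (M:ℝ) ^ 2) = β ^ 2 := by
          rw [ht]; field_simp; ring
        rw [le_div_iff₀ (by positivity)]
        nlinarith [htt, hK1, hβ, sq_nonneg β,
          mul_nonneg (mul_nonneg (Nat.cast_nonneg (α := ℝ) K)
            (by linarith : (0:ℝ) ≤ (K:ℝ) - 1)) (sq_nonneg β)]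
end
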